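/- Let s ≥ 2, let y : [2, s] → [0, ∞) be continuously differentiable, let g : [2, s] → [0, ∞) be locally integrable, and let C, ε, σ > 0 be constants such that y(τ) y′(τ) ≤ g(τ) y(τ) + C² ε² τ^{−1−σ} for all τ ∈ [2, s]. Then y(τ) ≤ y(2) + C ε (1 + σ^{−1}) + ∫₂^τ g(η) dη for all τ ∈ [2, s]. -/

import Mathlib

noncomputable section
open MeasureTheory

/-- A nonlinear variant of Gronwall's inequality: if `y y′ ≤ g y + C²ε²τ^(−1−σ)` on `[2,s]`,
then `y(τ) ≤ y(2) + Cε(1 + σ⁻¹) + ∫₂^τ g`. -/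
theorem nonlinear_gronwall_inequality
    (s : ℝ) (hs : 2 ≤ s)
    (y y' g : ℝ → ℝ)
    (hy : ∀ τ ∈ Set.Icc (2 : ℝ) s, HasDerivAt y (y' τ) τ)
    (hy' : ContinuousOn y' (Set.Icc 2 s))
    (hynn : ∀ τ ∈ Set.Icc (2 : ℝ) s, 0 ≤ y τ)
    (hg : IntegrableOn g (Set.Icc 2 s))
    (hgnn : ∀ τ ∈ Set.Icc (2 : ℝ) s, 0 ≤ g τ)
    (C ε σ : ℝ) (hC : 0 < C) (hε : 0 < ε) (hσ : 0 < σ)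
    (hineq : ∀ τ ∈ Set.Icc (2 : ℝ) s,
      y τ * y' τ ≤ g τ * y τ + C ^ 2 * ε ^ 2 * τ ^ (-1 - σ)) :
    ∀ τ ∈ Set.Icc (2 : ℝ) s,
      y τ ≤ y 2 + C * ε * (1 + σ⁻¹) + ∫ η in (2 : ℝ)..τ, g η := by
  have hσ' : σ ≠ 0 := hσ.ne'
  set B : ℝ → ℝ := fun τ => 1 + (2/σ) * ((2:ℝ) ^ (-σ) - τ ^ (-σ)) with hBdef
  set A : ℝ → ℝ := fun τ => Real.sqrt (B τ) with hAdef
  set G : ℝ → ℝ := fun τ => ∫ η in (2:ℝ)..τ, g η with hGdef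
  have hB1 : ∀ τ : ℝ, 2 ≤ τ → (1:ℝ) ≤ B τ := by
    intro τ hτ
    have h1 : τ ^ (-σ) ≤ (2:ℝ) ^ (-σ) :=
      Real.rpow_le_rpow_of_nonpos (by norm_num) hτ (by linarith)
    have h2 : 0 ≤ (2/σ) * ((2:ℝ) ^ (-σ) - τ ^ (-σ)) :=
      mul_nonneg (by positivity) (by linarith)
    simp only [hBdef]; linarith
  have hA1 : ∀ τ : ℝ, 2 ≤ τ → (1:ℝ) ≤ A τ := by
    intro τ hτ
    have := Real.sqrt_le_sqrt (hB1 τ hτ)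
    rwa [Real.sqrt_one] at this
  have hAub : ∀ τ : ℝ, 2 ≤ τ → A τ ≤ 1 + σ⁻¹ := by
    intro τ hτ
    have h1 : (0:ℝ) ≤ τ ^ (-σ) := Real.rpow_nonneg (by linarith) _
    have h2 : (2:ℝ) ^ (-σ) ≤ 1 :=
      Real.rpow_le_one_of_one_le_of_nonpos (by norm_num) (by linarith)
    have hBle : B τ ≤ (1 + σ⁻¹) ^ 2 := by
      have : B τ ≤ 1 + 2/σ := by
        simp only [hBdef]
        have : (2/σ) * ((2:ℝ) ^ (-σ) - τ ^ (-σ)) ≤ (2/σ) * 1 :=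
          mul_le_mul_of_nonneg_left (by linarith) (by positivity)
        linarith
      have h3 : 1 + 2/σ ≤ (1 + σ⁻¹) ^ 2 := by
        have e1 : (1 + σ⁻¹) ^ 2 = 1 + 2 * σ⁻¹ + σ⁻¹ ^ 2 := by ring
        have e2 : 2/σ = 2 * σ⁻¹ := by rw [div_eq_mul_inv]
        have e3 : (0:ℝ) ≤ σ⁻¹ ^ 2 := by positivity
        rw [e1, e2]; linarith
      linarith
    calc A τ ≤ Real.sqrt ((1 + σ⁻¹)^2) := Real.sqrt_le_sqrt hBle
      _ = 1 + σ⁻¹ := Real.sqrt_sq (by positivity)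
  have hAderiv : ∀ τ : ℝ, 2 ≤ τ → HasDerivAt A (τ ^ (-1 - σ) / A τ) τ := by
    intro τ hτ
    have hτ0 : (0:ℝ) < τ := by linarith
    have h1 : HasDerivAt (fun x : ℝ => x ^ (-σ)) ((-σ) * τ ^ (-σ - 1)) τ :=
      Real.hasDerivAt_rpow_const (Or.inl hτ0.ne')
    have h2 : HasDerivAt B ((2/σ) * (0 - (-σ) * τ ^ (-σ - 1))) τ :=
      (((hasDerivAt_const τ ((2:ℝ) ^ (-σ))).sub h1).const_mul (2/σ)).const_add 1
    have hBpos : (0:ℝ) < B τ := lt_of_lt_of_le one_pos (hB1 τ hτ)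
    have h3 := (Real.hasDerivAt_sqrt hBpos.ne').comp τ h2
    refine h3.congr_deriv ?_
    have hAne : A τ ≠ 0 := by
      have := hA1 τ hτ; intro h; rw [h] at this; linarith
    have hexp : (-1 - σ : ℝ) = -σ - 1 := by ring
    rw [hexp]
    simp only [hAdef]
    field_simp
    ring
  have hsub : ∀ a b : ℝ, 2 ≤ a → b ≤ s → Set.Icc a b ⊆ Set.Icc 2 s := by
    intro a b ha hb x hx
    exact ⟨le_trans ha hx.1, le_trans hx.2 hb⟩
  have hy_cont : ContinuousOn y (Set.Icc 2 s) := fun τ hτ =>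
    (hy τ hτ).continuousAt.continuousWithinAt
  have hA_cont : ContinuousOn A (Set.Icc 2 s) := fun τ hτ =>
    (hAderiv τ hτ.1).continuousAt.continuousWithinAt
  have hG_cont : ContinuousOn G (Set.Icc 2 s) := by
    have := intervalIntegral.continuousOn_primitive_interval
      (a := 2) (b := s) (μ := volume) (f := g) (by rwa [Set.uIcc_of_le hs])
    rwa [Set.uIcc_of_le hs] at this
  have hGnn : ∀ τ ∈ Set.Icc (2:ℝ) s, 0 ≤ G τ := by
    intro τ hτ
    exact intervalIntegral.integral_nonneg hτ.1 (fun x hx => hgnn x (hsub 2 τ le_rfl hτ.2 hx))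
  have hgint : ∀ a b : ℝ, 2 ≤ a → b ≤ s → a ≤ b → IntervalIntegrable g volume a b := by
    intro a b ha hb hab
    refine MeasureTheory.IntegrableOn.intervalIntegrable ?_
    rw [Set.uIcc_of_le hab]
    exact hg.mono_set (hsub a b ha hb)
  have hy2 : (0:ℝ) ≤ y 2 := hynn 2 ⟨le_rfl, hs⟩
  -- main claim with A
  have key : ∀ τ₁ ∈ Set.Icc (2:ℝ) s, y τ₁ ≤ y 2 + C * ε * A τ₁ + G τ₁ := by
    by_contra hcon
    push_neg at hcon
    obtain ⟨τ₁, hτ₁, hlt⟩ := hcon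
    set u : ℝ → ℝ := fun τ => y 2 + C * ε * A τ + G τ with hudef
    set S : Set ℝ := {τ ∈ Set.Icc (2:ℝ) τ₁ | y τ ≤ u τ} with hSdef
    have hIccsub : Set.Icc (2:ℝ) τ₁ ⊆ Set.Icc 2 s := hsub 2 τ₁ le_rfl hτ₁.2
    have hu_cont : ContinuousOn u (Set.Icc (2:ℝ) τ₁) :=
      (continuousOn_const.add (continuousOn_const.mul (hA_cont.mono hIccsub))).add
        (hG_cont.mono hIccsub)
    have hS_closed : IsClosed S := by
      have : S = Set.Icc (2:ℝ) τ₁ ∩ (fun τ => y τ - u τ) ⁻¹' Set.Iic 0 := by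
        ext x; simp [hSdef, sub_nonpos, Set.mem_setOf_eq, and_comm]
      rw [this]
      exact ContinuousOn.preimage_isClosed_of_isClosed
        ((hy_cont.mono hIccsub).sub hu_cont) isClosed_Icc isClosed_Iic
    have hA2 : A 2 = 1 := by simp [hAdef, hBdef, Real.sqrt_one]
    have hG2 : G 2 = 0 := by simp [hGdef]
    have h2S : (2:ℝ) ∈ S := by
      refine ⟨⟨le_rfl, hτ₁.1⟩, ?_⟩
      simp only [hudef, hA2, hG2]
      nlinarith
    have hS_bdd : BddAbove S := ⟨τ₁, fun x hx => hx.1.2⟩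
    set τ₀ := sSup S with hτ₀def
    have hτ₀S : τ₀ ∈ S := hS_closed.csSup_mem ⟨2, h2S⟩ hS_bdd
    have hτ₀mem : τ₀ ∈ Set.Icc (2:ℝ) τ₁ := hτ₀S.1
    have hτ₁nS : τ₁ ∉ S := fun h => absurd h.2 (not_le.2 hlt)
    have hτ₀lt : τ₀ < τ₁ := lt_of_le_of_ne hτ₀mem.2 (fun h => hτ₁nS (h ▸ hτ₀S))
    have hnot : ∀ τ ∈ Set.Ioc τ₀ τ₁, u τ < y τ := by
      intro τ hτ
      by_contra h
      push_neg at h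
      have : τ ∈ S := ⟨⟨le_trans hτ₀mem.1 hτ.1.le, hτ.2⟩, h⟩
      exact absurd (le_csSup hS_bdd this) (not_le.2 hτ.1)
    -- pointwise derivative bound on Ioc
    have hpt : ∀ τ ∈ Set.Ioc τ₀ τ₁, y' τ ≤ g τ + C * ε * (τ ^ (-1-σ) / A τ) := by
      intro τ hτ
      have hτs : τ ∈ Set.Icc (2:ℝ) s :=
        hIccsub ⟨le_trans hτ₀mem.1 hτ.1.le, hτ.2⟩
      have hτ2 : (2:ℝ) ≤ τ := hτs.1
      have hApos : 0 < A τ := lt_of_lt_of_le one_pos (hA1 τ hτ2)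
      have hCA : 0 < C * ε * A τ := by positivity
      have hylb : C * ε * A τ < y τ := by
        have := hnot τ hτ
        have hG := hGnn τ hτs
        simp only [hudef] at this
        linarith
      have hy0 : 0 < y τ := lt_trans hCA hylb
      have h1 := hineq τ hτs
      have hrnn : (0:ℝ) ≤ τ ^ (-1-σ) := Real.rpow_nonneg (by linarith) _
      have h2a : y' τ ≤ (g τ * y τ + C ^ 2 * ε ^ 2 * τ ^ (-1-σ)) / y τ := by
        rw [le_div_iff₀ hy0, mul_comm]; exact h1
      have h2b : (g τ * y τ + C ^ 2 * ε ^ 2 * τ ^ (-1-σ)) / y τ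
          = g τ + C ^ 2 * ε ^ 2 * τ ^ (-1-σ) / y τ := by
        field_simp
      have h2 : y' τ ≤ g τ + C ^ 2 * ε ^ 2 * τ ^ (-1-σ) / y τ := h2b ▸ h2a
      have h3 : C ^ 2 * ε ^ 2 * τ ^ (-1-σ) / y τ ≤ C ^ 2 * ε ^ 2 * τ ^ (-1-σ) / (C * ε * A τ) :=
        div_le_div_of_nonneg_left (by positivity) hCA hylb.le
      have h4 : C ^ 2 * ε ^ 2 * τ ^ (-1-σ) / (C * ε * A τ) = C * ε * (τ ^ (-1-σ) / A τ) := by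
        field_simp
      linarith [h3, h4 ▸ h3]
    -- integrate
    have hτ₀2 : (2:ℝ) ≤ τ₀ := hτ₀mem.1
    have hsub01 : Set.Icc τ₀ τ₁ ⊆ Set.Icc 2 s := hsub τ₀ τ₁ hτ₀2 hτ₁.2
    set f : ℝ → ℝ := fun τ => τ ^ (-1-σ) / A τ with hfdef
    have hf_cont : ContinuousOn f (Set.Icc (2:ℝ) s) := by
      intro τ hτ
      have hτ0 : (0:ℝ) < τ := by have := hτ.1; linarith
      have hAne : A τ ≠ 0 := by
        have := hA1 τ hτ.1; intro h; rw [h] at this; linarith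
      have h1 : ContinuousAt (fun x : ℝ => x ^ (-1-σ)) τ :=
        (Real.continuousAt_rpow_const τ _ (Or.inl hτ0.ne')).congr (by
          filter_upwards with x; rfl)
      exact (h1.continuousWithinAt.div ((hA_cont τ hτ)) hAne)
    have hle : τ₀ ≤ τ₁ := hτ₀mem.2
    have huIcc : Set.uIcc τ₀ τ₁ = Set.Icc τ₀ τ₁ := Set.uIcc_of_le hle
    -- FTC for y
    have hy'int : IntervalIntegrable y' volume τ₀ τ₁ := by
      apply ContinuousOn.intervalIntegrable
      rw [huIcc]; exact hy'.mono hsub01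
    have hFTCy : ∫ τ in τ₀..τ₁, y' τ = y τ₁ - y τ₀ := by
      apply intervalIntegral.integral_eq_sub_of_hasDerivAt
      · intro τ hτ; rw [huIcc] at hτ; exact hy τ (hsub01 hτ)
      · exact hy'int
    -- FTC for A
    have hfint : IntervalIntegrable f volume τ₀ τ₁ := by
      apply ContinuousOn.intervalIntegrable
      rw [huIcc]; exact hf_cont.mono hsub01
    have hFTCA : ∫ τ in τ₀..τ₁, f τ = A τ₁ - A τ₀ := by
      apply intervalIntegral.integral_eq_sub_of_hasDerivAt
      · intro τ hτ; rw [huIcc] at hτ; exact hAderiv τ (hsub01 hτ).1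
      · exact hfint
    -- g integral
    have hgint01 : IntervalIntegrable g volume τ₀ τ₁ := hgint τ₀ τ₁ hτ₀2 hτ₁.2 hle
    have hGdiff : G τ₁ - G τ₀ = ∫ τ in τ₀..τ₁, g τ := by
      simp only [hGdef]
      exact intervalIntegral.integral_interval_sub_left
        (hgint 2 τ₁ le_rfl hτ₁.2 hτ₁.1) (hgint 2 τ₀ le_rfl (le_trans hle hτ₁.2) hτ₀2)
    -- RHS integrable
    have hrhsint : IntervalIntegrable (fun τ => g τ + C * ε * f τ) volume τ₀ τ₁ :=
      hgint01.add (hfint.const_mul _)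
    -- a.e. inequality
    have hae : ∫ τ in τ₀..τ₁, y' τ ≤ ∫ τ in τ₀..τ₁, (g τ + C * ε * f τ) := by
      apply intervalIntegral.integral_mono_ae_restrict hle hy'int hrhsint
      rw [show volume.restrict (Set.Icc τ₀ τ₁) = volume.restrict (Set.Ioc τ₀ τ₁) from
        (Measure.restrict_congr_set Ioc_ae_eq_Icc).symm]
      exact (MeasureTheory.ae_restrict_iff' measurableSet_Ioc).2
        (Filter.Eventually.of_forall hpt)
    have hrhs : ∫ τ in τ₀..τ₁, (g τ + C * ε * f τ)
        = (G τ₁ - G τ₀) + C * ε * (A τ₁ - A τ₀) := by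
      rw [intervalIntegral.integral_add hgint01 (hfint.const_mul _),
        intervalIntegral.integral_const_mul, hFTCA, hGdiff]
    have hy₀ : y τ₀ ≤ u τ₀ := hτ₀S.2
    have : y τ₁ ≤ u τ₁ := by
      simp only [hudef] at hy₀ ⊢
      rw [hFTCy, hrhs] at hae
      linarith
    exact absurd this (not_le.2 hlt)
  intro τ hτ
  have h1 := key τ hτ
  have h2 := hAub τ hτ.1
  have : C * ε * A τ ≤ C * ε * (1 + σ⁻¹) := mul_le_mul_of_nonneg_left h2 (by positivity)
  simp only [hGdef] at h1
  linarith
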